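/- Let R be a ring and P_1, ..., P_t a finite collection of (two-sided) ideals of R such that the intersection P_1 ∩ P_2 ∩ ... ∩ P_t is a nil ideal. Let S be a subring of R, and for each i let S/P_i = {s + P_i : s ∈ S} be the corresponding subring of the factor ring R/P_i. If (S/P_i) ∩ U(R/P_i) = U(S/P_i) for all i ∈ {1, ..., t}, then S ∩ U(R) = U(S). -/

import Mathlib

private lemma listprod_mem_aux {R : Type*} [Ring R] (P : TwoSidedIdeal R) :
    ∀ (l : List R) (y : R), y ∈ l → y ∈ P → l.prod ∈ P := by
  intro l
  induction l with
  | nil => intro y hy; simp at hy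
  | cons a l ih =>
    intro y hy hP
    rw [List.prod_cons]
    rcases List.mem_cons.mp hy with h | h
    · exact P.mul_mem_right _ _ (h ▸ hP)
    · exact P.mul_mem_left _ _ (ih y h hP)

private lemma listprod_form_aux {R : Type*} [Ring R] (S : Subring R) (x : R) (hx : x ∈ S) :
    ∀ l : List R, (∀ y ∈ l, ∃ v ∈ S, y = 1 - x * v) →
      ∃ w ∈ S, l.prod = 1 - x * w := by
  intro l
  induction l with
  | nil => intro _; exact ⟨0, S.zero_mem, by simp⟩
  | cons a l ih =>
    intro hl
    obtain ⟨w, hwS, hw⟩ := ih (fun y hy => hl y (List.mem_cons_of_mem _ hy))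
    obtain ⟨v, hvS, hv⟩ := hl a List.mem_cons_self
    refine ⟨w + v * (1 - x * w), ?_, ?_⟩
    · exact S.add_mem hwS (S.mul_mem hvS (S.sub_mem S.one_mem (S.mul_mem hx hwS)))
    · rw [List.prod_cons, hw, hv]; noncomm_ring

private lemma geom_aux {R : Type*} [Ring R] (a : R) (n : ℕ) :
    (1 - a) * (∑ i ∈ Finset.range n, a ^ i) = 1 - a ^ n := by
  induction n with
  | zero => simp
  | succ n ih =>
    rw [Finset.sum_range_succ, mul_add, ih, pow_succ']
    noncomm_ring

/-- Let `P₁, …, Pₜ` be two-sided ideals of a ring `R` whose intersection is a nil ideal,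
and let `S` be a subring of `R`.  If for every `i` the image subring
`S/Pᵢ = {s + Pᵢ : s ∈ S}` of the factor ring `R/Pᵢ` satisfies
`(S/Pᵢ) ∩ U(R/Pᵢ) = U(S/Pᵢ)`, then `S ∩ U(R) = U(S)`, i.e. every element of `S`
invertible in `R` has its inverse in `S`. -/
theorem stmt_6 {R : Type*} [Ring R] (t : ℕ) (P : Fin t → TwoSidedIdeal R)
    (hnil : ∀ x : R, (∀ i, x ∈ P i) → IsNilpotent x)
    (S : Subring R)
    (h : ∀ i : Fin t, ∀ u : ((P i).ringCon.Quotient)ˣ,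
      u.val ∈ S.map (RingCon.mk' (P i).ringCon) →
      (u⁻¹).val ∈ S.map (RingCon.mk' (P i).ringCon))
    (x : Rˣ) (hx : (x : R) ∈ S) :
    ((x⁻¹ : Rˣ) : R) ∈ S := by
  -- step 1: for each i, find sᵢ ∈ S with x⁻¹ - sᵢ ∈ P i
  have hs : ∀ i : Fin t, ∃ v ∈ S, ((x⁻¹ : Rˣ) : R) - v ∈ P i := by
    intro i
    set f := RingCon.mk' (P i).ringCon with hf
    have hu := h i (Units.map f.toMonoidHom x) ⟨(x : R), hx, rfl⟩
    rw [← map_inv] at hu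
    obtain ⟨v, hvS, hv⟩ := hu
    refine ⟨v, hvS, ?_⟩
    rw [← (P i).rel_iff]
    have : f ((x⁻¹ : Rˣ) : R) = f v := hv.symm
    exact (P i).ringCon.eq.mp this
  choose s hsS hsP using hs
  -- step 2: the product of (1 - x * sᵢ) lies in every P i
  set l : List R := (List.finRange t).map (fun i => 1 - (x : R) * s i) with hl
  set a : R := l.prod with ha
  have haP : ∀ i, a ∈ P i := by
    intro i
    apply listprod_mem_aux (P i) l (1 - (x : R) * s i)
      (List.mem_map.mpr ⟨i, List.mem_finRange i, rfl⟩)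
    have : 1 - (x : R) * s i = (x : R) * (((x⁻¹ : Rˣ) : R) - s i) := by
      rw [mul_sub, Units.mul_inv]
    rw [this]
    exact (P i).mul_mem_left _ _ (hsP i)
  -- step 3: a = 1 - x * w for some w ∈ S
  obtain ⟨w, hwS, hw⟩ := listprod_form_aux S (x : R) hx l
    (fun y hy => by
      obtain ⟨i, _, rfl⟩ := List.mem_map.mp hy
      exact ⟨s i, hsS i, rfl⟩)
  -- step 4: a is nilpotent
  obtain ⟨n, hn⟩ := hnil a haP
  -- step 5: x * (w * ∑ a^k) = 1
  have key : (x : R) * (w * ∑ i ∈ Finset.range n, a ^ i) = 1 := by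
    rw [← mul_assoc]
    have hxw : (x : R) * w = 1 - a := by rw [ha, hw]; noncomm_ring
    rw [hxw, geom_aux, hn, sub_zero]
  have hinv : ((x⁻¹ : Rˣ) : R) = w * ∑ i ∈ Finset.range n, a ^ i := by
    have := congrArg (fun z => ((x⁻¹ : Rˣ) : R) * z) key
    simpa [← mul_assoc, Units.inv_mul] using this.symm
  rw [hinv]
  have haS : a ∈ S := by
    rw [ha, hw]
    exact S.sub_mem S.one_mem (S.mul_mem hx hwS)
  exact S.mul_mem hwS (sum_mem (fun i _ => S.pow_mem haS i))
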